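/- Let α ∈ ℂ be any root of φ(X) = X⁴ − 2X³ + 6X − 3. Then the field K = ℚ(α) has degree 4 over ℚ and has no subfields other than ℚ and K itself: every intermediate field F of the extension K/ℚ satisfies F = ⊥ or F = ⊤. -/

import Mathlib

set_option maxHeartbeats 2000000
set_option synthInstance.maxHeartbeats 400000

open Polynomial Module

/-- The resolvent-cubic identity: if `X⁴-2X³+6X-3 = (X²+aX+b)(X²+cX+d)` coefficientwise,
then `(b+d)³ = 24`. -/
private lemma key_identity {E : Type*} [Field E] [CharZero E] (a b c d : E)
    (h1 : a + c = -2) (h2 : b + d + a * c = 0) (h3 : a * d + b * c = 6)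
    (h4 : b * d = -3) : (b + d) ^ 3 = 24 := by
  by_cases ha : a = -1
  · exfalso
    subst ha
    have hc : c = -1 := by linear_combination h1
    subst hc
    have h5 : (5 : E) = 0 := by linear_combination -h2 - h3
    exact absurd h5 (by norm_num)
  · have ha' : a + 1 ≠ 0 := fun h => ha (by linear_combination h)
    have hbd : b + d = a ^ 2 + 2 * a := by linear_combination h2 - a * h1
    have hb : b * (2 * (a + 1)) = a ^ 3 + 2 * a ^ 2 - 6 := by
      linear_combination (b - a ^ 2) * h1 + a * h2 - h3
    have hd : d * (2 * (a + 1)) = a ^ 3 + 4 * a ^ 2 + 4 * a + 6 := by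
      linear_combination 2 * (a + 1) * hbd - hb
    rw [hbd]
    linear_combination 4 * (a + 1) ^ 2 * h4 - 2 * (a + 1) * b * hd
      - (a ^ 3 + 4 * a ^ 2 + 4 * a + 6) * hb

private lemma rat_cube_ne (q : ℚ) : q ^ 3 ≠ 24 := by
  intro h
  have hint : IsIntegral ℤ q := by
    refine ⟨X ^ 3 - C 24, monic_X_pow_sub_C _ (by norm_num), ?_⟩
    rw [← aeval_def]
    simp only [map_sub, aeval_X_pow, aeval_C, algebraMap_int_eq, Int.coe_castRingHom,
      map_ofNat, Int.cast_ofNat]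
    linear_combination h
  obtain ⟨n, hn⟩ := IsIntegrallyClosed.isIntegral_iff.mp hint
  have hn' : (n : ℚ) ^ 3 = 24 := by rw [show ((n : ℚ)) = q from hn]; exact h
  have h3 : n ^ 3 = 24 := by exact_mod_cast hn'
  rcases le_or_gt n 2 with h' | h'
  · nlinarith [sq_nonneg (n + 1)]
  · nlinarith [sq_nonneg (2 * n + 3)]

private lemma irr24 : Irreducible (X ^ 3 - C (24 : ℚ)) :=
  X_pow_sub_C_irreducible_of_prime (by norm_num) (fun b => rat_cube_ne b)

/-- No element of a ℚ-extension of degree ≤ 2 cubes to 24. -/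
private lemma no_cube24 (E : Type*) [Field E] [Algebra ℚ E] [FiniteDimensional ℚ E]
    (hE : finrank ℚ E ≤ 2) (y : E) : y ^ 3 ≠ 24 := by
  intro hy
  have hint : IsIntegral ℚ y := Algebra.IsIntegral.isIntegral y
  have h0 : (aeval y) (X ^ 3 - C (24 : ℚ)) = 0 := by
    simp only [map_sub, aeval_X_pow, aeval_C, map_ofNat]
    rw [hy]; ring
  obtain ⟨t, ht⟩ := minpoly.dvd ℚ y h0
  have hm : minpoly ℚ y = X ^ 3 - C (24 : ℚ) := by
    rcases irr24.isUnit_or_isUnit ht with hu | hu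
    · exact absurd hu (minpoly.not_isUnit ℚ y)
    · obtain ⟨u, hu⟩ := hu.exists_left_inv
      refine eq_of_monic_of_associated (minpoly.monic hint)
        (monic_X_pow_sub_C _ (by norm_num)) ?_
      exact ⟨(IsUnit.of_mul_eq_one (a := t) u (by rwa [mul_comm] at hu)).unit, by
        simp [ht]⟩
  have hle := minpoly.natDegree_le (A := ℚ) y
  rw [hm, natDegree_X_pow_sub_C] at hle
  omega

/-- The quartic has no rational root. -/
private lemma no_rat_root (r : ℚ) (h : r ^ 4 - 2 * r ^ 3 + 6 * r - 3 = 0) : False := by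
  have hint : IsIntegral ℤ r := by
    refine ⟨X ^ 4 - C 2 * X ^ 3 + C 6 * X - C 3, ?_, ?_⟩
    · monicity!
    · rw [← aeval_def]
      simp only [map_sub, map_add, map_mul, aeval_X_pow, aeval_C, aeval_X,
        algebraMap_int_eq, Int.coe_castRingHom, map_ofNat, Int.cast_ofNat]
      linear_combination h
  obtain ⟨n, hn⟩ := IsIntegrallyClosed.isIntegral_iff.mp hint
  have hz : n ^ 4 - 2 * n ^ 3 + 6 * n - 3 = 0 := by
    have : (n : ℚ) ^ 4 - 2 * (n : ℚ) ^ 3 + 6 * (n : ℚ) - 3 = 0 := by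
      rw [show ((n : ℚ)) = r from hn]; exact h
    exact_mod_cast this
  have hdvd : n ∣ 3 := ⟨n ^ 3 - 2 * n ^ 2 + 6, by linear_combination -hz⟩
  have hub : n ≤ 3 := Int.le_of_dvd (by norm_num) hdvd
  have hlb : -3 ≤ n := by
    have : -n ≤ 3 := Int.le_of_dvd (by norm_num) ((neg_dvd).mpr hdvd)
    omega
  interval_cases n <;> norm_num at hz

private lemma monic_quad_rep {E : Type*} [Field E] {p : E[X]} (hp : p.Monic)
    (h2 : p.natDegree = 2) : p = X ^ 2 + C (p.coeff 1) * X + C (p.coeff 0) := by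
  ext n
  rcases n with _ | _ | _ | n
  · simp
  · simp
  · simpa [coeff_X, coeff_C] using (h2 ▸ hp.coeff_natDegree : p.coeff 2 = 1)
  · rw [coeff_eq_zero_of_natDegree_lt (by omega : p.natDegree < n + 3)]
    simp [coeff_X, coeff_C]

/-- A factorization of the quartic into monic quadratics yields a cube root of 24. -/
private lemma quad_factor {E : Type*} [Field E] [CharZero E] (m q : E[X])
    (hm : m.Monic) (hq : q.Monic) (hm2 : m.natDegree = 2) (hq2 : q.natDegree = 2)
    (h : m * q = X ^ 4 - C 2 * X ^ 3 + C 6 * X - C 3) :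
    ∃ y : E, y ^ 3 = 24 := by
  set a := m.coeff 1
  set b := m.coeff 0
  set c := q.coeff 1
  set d := q.coeff 0
  rw [monic_quad_rep hm hm2, monic_quad_rep hq hq2] at h
  have hexp : (X ^ 2 + C a * X + C b) * (X ^ 2 + C c * X + C d) =
      X ^ 4 + C (a + c) * X ^ 3 + C (b + d + a * c) * X ^ 2 + C (a * d + b * c) * X
        + C (b * d) := by
    simp only [map_add, map_mul]
    ring
  rw [hexp] at h
  have e3 : a + c = -2 := by
    have h3 := congrArg (fun f => Polynomial.coeff f 3) h
    simp only [coeff_add, coeff_sub, coeff_C_mul, coeff_X_pow, coeff_C, coeff_X] at h3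
    norm_num at h3
    linear_combination h3
  have e2 : b + d + a * c = 0 := by
    have h3 := congrArg (fun f => Polynomial.coeff f 2) h
    simp only [coeff_add, coeff_sub, coeff_C_mul, coeff_X_pow, coeff_C, coeff_X] at h3
    norm_num at h3
    linear_combination h3
  have e1 : a * d + b * c = 6 := by
    have h3 := congrArg (fun f => Polynomial.coeff f 1) h
    simp only [coeff_add, coeff_sub, coeff_C_mul, coeff_X_pow, coeff_C, coeff_X] at h3
    norm_num at h3
    linear_combination h3
  have e0 : b * d = -3 := by
    have h3 := congrArg (fun f => Polynomial.coeff f 0) h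
    simp only [coeff_add, coeff_sub, coeff_C_mul, coeff_X_pow, coeff_C, coeff_X] at h3
    norm_num at h3
    linear_combination h3
  exact ⟨b + d, key_identity a b c d e3 e2 e1 e0⟩

private noncomputable def Pq : ℚ[X] := X ^ 4 - C 2 * X ^ 3 + C 6 * X - C 3

private lemma Pq_monic : Pq.Monic := by unfold Pq; monicity!

private lemma Pq_deg : Pq.natDegree = 4 := by unfold Pq; compute_degree!

theorem stmt_11 (α : ℂ) (hα : α ^ 4 - 2 * α ^ 3 + 6 * α - 3 = 0) :
    Module.finrank ℚ (IntermediateField.adjoin ℚ ({α} : Set ℂ)) = 4 ∧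
    ∀ F : IntermediateField ℚ (IntermediateField.adjoin ℚ ({α} : Set ℂ)),
      F = ⊥ ∨ F = ⊤ := by
  have hP : Pq = X ^ 4 - C 2 * X ^ 3 + C 6 * X - C 3 := rfl
  have hPmonic : Pq.Monic := Pq_monic
  have hPdeg : Pq.natDegree = 4 := Pq_deg
  have hPne : Pq ≠ 0 := hPmonic.ne_zero
  have haev : aeval α Pq = 0 := by
    rw [hP]
    simp only [map_sub, map_add, map_mul, aeval_X_pow, aeval_C, aeval_X, eq_ratCast]
    push_cast
    linear_combination hα
  have hαint : IsIntegral ℚ α := ⟨Pq, hPmonic, by rwa [← aeval_def]⟩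
  -- the minimal polynomial of α has degree 4
  have hdeg4 : (minpoly ℚ α).natDegree = 4 := by
    obtain ⟨q, hq⟩ := minpoly.dvd ℚ α haev
    have hmmonic := minpoly.monic hαint
    have hqmonic : q.Monic := hmmonic.of_mul_monic_left (hq ▸ hPmonic)
    have hdegs : (minpoly ℚ α).natDegree + q.natDegree = 4 := by
      rw [← natDegree_mul hmmonic.ne_zero hqmonic.ne_zero, ← hq, hPdeg]
    have hpos := minpoly.natDegree_pos hαint
    set n := (minpoly ℚ α).natDegree with hn
    have hle : n ≤ 4 := by omega
    interval_cases n
    · -- degree 1 : α is rational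
      exfalso
      have hrep := hmmonic.eq_X_add_C hn.symm
      have := minpoly.aeval ℚ α
      rw [hrep] at this
      simp only [map_add, aeval_X, aeval_C] at this
      set e := (minpoly ℚ α).coeff 0
      have hcast := eq_ratCast (algebraMap ℚ ℂ) e
      have hαr : α = ((-e : ℚ) : ℂ) := by push_cast; linear_combination this - hcast
      rw [hαr] at hα
      apply no_rat_root (-e)
      exact_mod_cast hα
    · -- degree 2 : quartic splits into two rational quadratics
      exfalso
      obtain ⟨y, hy⟩ := quad_factor (minpoly ℚ α) q hmmonic hqmonic hn.symm (by omega)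
        (by rw [← hq, hP])
      exact no_cube24 ℚ (by simp) y hy
    · -- degree 3 : quartic has a rational root
      exfalso
      have hq1 : q.natDegree = 1 := by omega
      have hrep := hqmonic.eq_X_add_C hq1
      apply no_rat_root (-(q.coeff 0))
      have : Pq.eval (-(q.coeff 0)) = 0 := by
        rw [hq, hrep]
        simp [eval_mul]
      rw [hP] at this
      simp only [eval_sub, eval_add, eval_mul, eval_pow, eval_C, eval_X] at this
      linear_combination this
    · rfl
  have hfinK : Module.finrank ℚ (IntermediateField.adjoin ℚ ({α} : Set ℂ)) = 4 := by
    rw [IntermediateField.adjoin.finrank hαint, hdeg4]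
  set K := IntermediateField.adjoin ℚ ({α} : Set ℂ) with hK
  refine ⟨hfinK, ?_⟩
  intro F
  haveI : FiniteDimensional ℚ K := IntermediateField.adjoin.finiteDimensional hαint
  obtain ⟨β, hβ⟩ : ∃ β : ↥K, algebraMap ↥K ℂ β = α :=
    ⟨IntermediateField.AdjoinSimple.gen ℚ α, IntermediateField.AdjoinSimple.algebraMap_gen ℚ α⟩
  clear_value K
  clear hK
  have htower : finrank ℚ ↥F * finrank ↥F ↥K = finrank ℚ ↥K := finrank_mul_finrank ℚ ↥F ↥K
  rw [hfinK] at htower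
  have hrpos : 0 < finrank ℚ ↥F := finrank_pos
  have hspos : 0 < finrank ↥F ↥K := finrank_pos
  have hrle : finrank ℚ ↥F ≤ 4 := Nat.le_of_dvd (by norm_num) ⟨finrank ↥F ↥K, htower.symm⟩
  have hcases : finrank ℚ ↥F = 1 ∨ finrank ℚ ↥F = 2 ∨ finrank ℚ ↥F = 4 := by
    have hdvd : finrank ℚ ↥F ∣ 4 := ⟨finrank ↥F ↥K, htower.symm⟩
    interval_cases h : finrank ℚ ↥F <;>
      first | omega | (exfalso; revert hdvd; decide)
  rcases hcases with h1 | h2 | h4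
  · exact Or.inl (IntermediateField.finrank_eq_one_iff.mp h1)
  · -- degree 2 intermediate field : impossible
    exfalso
    haveI : FiniteDimensional ℚ ↥F := FiniteDimensional.left ℚ ↥F ↥K
    haveI : FiniteDimensional ↥F ↥K := FiniteDimensional.right ℚ ↥F ↥K
    haveI : CharZero ↥F := charZero_of_injective_algebraMap (algebraMap ℚ ↥F).injective
    have haevK : aeval β Pq = 0 := by
      apply (algebraMap ↥K ℂ).injective
      rw [map_zero, ← aeval_algebraMap_apply, hβ]
      exact haev
    have hβintF : IsIntegral ↥F β := Algebra.IsIntegral.isIntegral β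
    have hmmonic : (minpoly ↥F β).Monic := minpoly.monic hβintF
    have hdvd : minpoly ↥F β ∣ Pq.map (algebraMap ℚ ↥F) :=
      minpoly.dvd ↥F β (by rw [aeval_map_algebraMap]; exact haevK)
    have hPmap : Pq.map (algebraMap ℚ ↥F) = X ^ 4 - C 2 * X ^ 3 + C 6 * X - C 3 := by
      rw [hP]
      simp [Polynomial.map_sub, Polynomial.map_add, Polynomial.map_mul,
        Polynomial.map_pow, map_C, map_X, map_ofNat]
    have hfrk : finrank ↥F ↥K = 2 := by rw [h2] at htower; omega
    have hβdeg4 : (minpoly ℚ β).natDegree = 4 := by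
      rw [← minpoly.algebraMap_eq (algebraMap ↥K ℂ).injective β, hβ]
      exact hdeg4
    have hmdeg : (minpoly ↥F β).natDegree = 2 := by
      have htow2 : finrank ↥F (IntermediateField.adjoin ↥F ({β} : Set ↥K)) *
          finrank (IntermediateField.adjoin ↥F ({β} : Set ↥K)) ↥K = 2 := by
        rw [finrank_mul_finrank ↥F (IntermediateField.adjoin ↥F ({β} : Set ↥K)) ↥K, hfrk]
      have hadj : finrank ↥F (IntermediateField.adjoin ↥F ({β} : Set ↥K)) =
          (minpoly ↥F β).natDegree :=
        IntermediateField.adjoin.finrank hβintF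
      have hne1 : (minpoly ↥F β).natDegree ≠ 1 := by
        intro h1
        have hrep := hmmonic.eq_X_add_C h1
        have heval := minpoly.aeval ↥F β
        rw [hrep] at heval
        rw [map_add, aeval_X, aeval_C] at heval
        have hβF : β = algebraMap ↥F ↥K (-((minpoly ↥F β).coeff 0)) := by
          rw [map_neg]; linear_combination heval
        have h4' : (minpoly ℚ (-((minpoly ↥F β).coeff 0) : ↥F)).natDegree = 4 := by
          rw [← minpoly.algebraMap_eq (algebraMap ↥F ↥K).injective
            (-((minpoly ↥F β).coeff 0)), ← hβF, hβdeg4]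
        have hle := minpoly.natDegree_le (A := ℚ) (-((minpoly ↥F β).coeff 0) : ↥F)
        rw [h4', h2] at hle
        omega
      rw [hadj] at htow2
      rcases (Nat.dvd_prime Nat.prime_two).mp
        ⟨finrank (IntermediateField.adjoin ↥F ({β} : Set ↥K)) ↥K, htow2.symm⟩ with h | h
      · exact absurd h hne1
      · exact h
    obtain ⟨q, hq⟩ := hdvd
    have hq' : minpoly ↥F β * q = X ^ 4 - C 2 * X ^ 3 + C 6 * X - C 3 := by
      rw [← hq, hPmap]
    have hq'monic : q.Monic := by
      apply hmmonic.of_mul_monic_left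
      rw [hq']
      monicity!
    have hqdeg : q.natDegree = 2 := by
      have hsum : (minpoly ↥F β).natDegree + q.natDegree = 4 := by
        rw [← natDegree_mul hmmonic.ne_zero
          (hmmonic.of_mul_monic_left (by rw [hq']; monicity!)).ne_zero, hq']
        compute_degree!
      omega
    obtain ⟨y, hy⟩ := quad_factor (minpoly ↥F β) q hmmonic hq'monic hmdeg hqdeg hq'
    exact no_cube24 ↥F (by omega) y hy
  · -- degree 4 : F = ⊤
    right
    apply IntermediateField.eq_of_le_of_finrank_eq le_top
    rw [h4, IntermediateField.finrank_top', hfinK]
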